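/- arXiv:2103.07057 — 2 statements merged into one kernel-verified Lean document; each statement's English description precedes it below -/
import Mathlib

section
/- For the complexified Kodaira Lie algebra, the Cauchy–Riemann operator D satisfies D(W) = 0 and D(Tⱼ)(T̄ₖ) = −(i/2)δⱼₖW, D(Tⱼ)(W̄) = 0 for all 1 ≤ j, k ≤ n. Moreover the kernel of D equals ℂW, and D restricts to a linear isomorphism from 𝔱^{1,0} = span_ℂ{T₁, …, Tₙ} onto the space of linear maps 𝔤^{0,1} → ℂW that vanish at W̄. (Hodge decomposition of the type-(1,0) space: H^{1,0} = 𝔠^{1,0} = ℂW and ∂̄ : 𝔱^{1,0} → 𝔠^{1,0}⊗𝔱^{0,1} is an isomorphism.) -/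
open Complex

/-- Index type for the basis `{X₁,…,Xₙ, Y₁,…,Yₙ, Z₁, Z₂}` of the Kodaira Lie algebra;
the same index set indexes the ℂ-basis of its complexification. -/
abbrev KIdx (n : ℕ) := Fin n ⊕ (Fin n ⊕ Fin 2)

def kX {n : ℕ} (j : Fin n) : KIdx n := Sum.inl j
def kY {n : ℕ} (j : Fin n) : KIdx n := Sum.inr (Sum.inl j)
def kZ {n : ℕ} (k : Fin 2) : KIdx n := Sum.inr (Sum.inr k)

/-- Structure constants of the Kodaira Lie algebra:
`⁅e i, e i'⁆ = kc i i' • Z₁`. -/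
def kc {n : ℕ} : KIdx n → KIdx n → ℝ
  | Sum.inl j, Sum.inr (Sum.inl k) => if j = k then 1 else 0
  | Sum.inr (Sum.inl j), Sum.inl k => if j = k then -1 else 0
  | _, _ => 0

/-- for the complexified Kodaira Lie algebra, the Cauchy–Riemann operator
`D(A)(B̄) = π^{1,0}(⁅B̄, A⁆)` satisfies `D(W) = 0`, `D(Tⱼ)(T̄ₖ) = −(i/2)δⱼₖ W`,
`D(Tⱼ)(W̄) = 0`; its kernel (within `𝔤^{1,0}`) equals `ℂW`; and `D` restricts to a linear
isomorphism from `𝔱^{1,0} = span{T₁,…,Tₙ}` onto the space of linear maps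
`𝔤^{0,1} → ℂW` vanishing at `W̄` (stated as injectivity on `𝔱^{1,0}` together with
surjectivity onto all prescribed such value systems).
Here `π` is the projection `π^{1,0} : 𝔤_ℂ → 𝔤^{1,0}` with kernel `𝔤^{0,1}`. -/
theorem stmt_10 (n : ℕ) (hn : 1 ≤ n) (L : Type*) [LieRing L] [LieAlgebra ℂ L]
    (b : Module.Basis (KIdx n) ℂ L)
    (hb : ∀ i i' : KIdx n, ⁅b i, b i'⁆ = (kc i i' : ℂ) • b (kZ 0))
    (T Tb : Fin n → L) (W Wb : L)
    (hT : ∀ j, T j = (1 / 2 : ℂ) • b (kX j) - (I / 2 : ℂ) • b (kY j))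
    (hTb : ∀ j, Tb j = (1 / 2 : ℂ) • b (kX j) + (I / 2 : ℂ) • b (kY j))
    (hW : W = (1 / 2 : ℂ) • b (kZ 0) - (I / 2 : ℂ) • b (kZ 1))
    (hWb : Wb = (1 / 2 : ℂ) • b (kZ 0) + (I / 2 : ℂ) • b (kZ 1))
    (π : L →ₗ[ℂ] L)
    (hπT : ∀ j, π (T j) = T j) (hπTb : ∀ j, π (Tb j) = 0)
    (hπW : π W = W) (hπWb : π Wb = 0) :
    (∀ y : L, π ⁅y, W⁆ = 0) ∧
    (∀ j k : Fin n, π ⁅Tb k, T j⁆ = if j = k then (-(I / 2) : ℂ) • W else 0) ∧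
    (∀ j : Fin n, π ⁅Wb, T j⁆ = 0) ∧
    ({A : L | A ∈ Submodule.span ℂ (Set.range T ∪ {W}) ∧
        ∀ B ∈ Submodule.span ℂ (Set.range Tb ∪ {Wb}), π ⁅B, A⁆ = 0}
      = ↑(Submodule.span ℂ ({W} : Set L))) ∧
    (∀ A ∈ Submodule.span ℂ (Set.range T),
        (∀ B ∈ Submodule.span ℂ (Set.range Tb ∪ {Wb}), π ⁅B, A⁆ = 0) → A = 0) ∧
    (∀ μ : Fin n → ℂ, ∃ A ∈ Submodule.span ℂ (Set.range T),
        (∀ k : Fin n, π ⁅Tb k, A⁆ = μ k • W) ∧ π ⁅Wb, A⁆ = 0) := by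

  classical
  -- structure constants vanish when an argument is a Z index
  have hkcZ : ∀ (i : KIdx n) (k : Fin 2), kc (n := n) i (kZ k) = 0 := by
    intro i k; rcases i with j | j | j <;> rfl
  -- Z basis vectors are central
  have hc : ∀ (k : Fin 2) (y : L), ⁅y, b (kZ k)⁆ = 0 := by
    intro k y
    have hy : y ∈ Submodule.span ℂ (Set.range b) := by rw [b.span_eq]; trivial
    induction hy using Submodule.span_induction with
    | mem x hx => obtain ⟨i, rfl⟩ := hx; rw [hb]; simp [hkcZ]
    | zero => simp
    | add x y _ _ hx hy => rw [add_lie, hx, hy, add_zero]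
    | smul c x _ hx => rw [smul_lie, hx, smul_zero]
  have hcl : ∀ (k : Fin 2) (y : L), ⁅b (kZ k), y⁆ = 0 := by
    intro k y; rw [← lie_skew, hc, neg_zero]
  have hWc : ∀ y : L, ⁅y, W⁆ = 0 := by
    intro y; rw [hW]; simp [lie_smul, hc]
  have hWbc : ∀ y : L, ⁅Wb, y⁆ = 0 := by
    intro y; rw [hWb]; simp [add_lie, smul_lie, hcl]
  have hπZ : π (b (kZ 0)) = W := by
    have h : b (kZ 0) = W + Wb := by rw [hW, hWb]; module
    rw [h, map_add, hπW, hπWb, add_zero]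
  -- the key bracket computation
  have hbr : ∀ j k : Fin n, ⁅Tb k, T j⁆
      = (if j = k then (-(I/2) : ℂ) else 0) • b (kZ 0) := by
    intro j k
    rw [hT, hTb]
    have h1 : kc (n := n) (kX k) (kX j) = 0 := rfl
    have h2 : kc (n := n) (kX k) (kY j) = if k = j then 1 else 0 := rfl
    have h3 : kc (n := n) (kY k) (kX j) = if k = j then -1 else 0 := rfl
    have h4 : kc (n := n) (kY k) (kY j) = 0 := rfl
    simp only [lie_sub, add_lie, lie_smul, smul_lie, hb, h1, h2, h3, h4]
    by_cases h : j = k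
    · subst h; simp only [if_pos rfl]; push_cast; module
    · rw [if_neg (Ne.symm h), if_neg (Ne.symm h), if_neg h]; push_cast; module
  have hπbr : ∀ j k : Fin n, π ⁅Tb k, T j⁆
      = if j = k then (-(I / 2) : ℂ) • W else 0 := by
    intro j k
    rw [hbr, map_smul, hπZ]
    split_ifs <;> simp
  -- evaluation on sums
  have hsum : ∀ (k : Fin n) (c : Fin n → ℂ),
      π ⁅Tb k, ∑ j, c j • T j⁆ = (c k * (-(I / 2))) • W := by
    intro k c
    have hexp : ⁅Tb k, ∑ j, c j • T j⁆ = ∑ j, ⁅Tb k, c j • T j⁆ := by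
      rw [← LieAlgebra.ad_apply (R := ℂ), map_sum]
      simp [LieAlgebra.ad_apply]
    rw [hexp, map_sum]
    simp only [lie_smul, map_smul, hπbr, smul_ite, smul_zero]
    rw [Finset.sum_ite_eq' Finset.univ k]
    simp [smul_smul]
  have hW0 : W ≠ 0 := by
    intro h
    have h2 : (b.repr W) (kZ 0) = (1 / 2 : ℂ) := by
      rw [hW]
      have hne : (kZ 1 : KIdx n) ≠ kZ 0 := by simp [kZ]
      simp [Finsupp.single_apply, hne]
    rw [h] at h2
    simp at h2
  -- injectivity on span of the T's
  have hinj : ∀ A ∈ Submodule.span ℂ (Set.range T),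
      (∀ k : Fin n, π ⁅Tb k, A⁆ = 0) → A = 0 := by
    intro A hA hall
    obtain ⟨c, rfl⟩ := (Submodule.mem_span_range_iff_exists_fun ℂ).mp hA
    have hc : ∀ k, c k = 0 := by
      intro k
      have := hall k
      rw [hsum k c] at this
      rcases smul_eq_zero.mp this with h | h
      · rcases mul_eq_zero.mp h with h | h
        · exact h
        · exfalso; apply I_ne_zero
          have : (I : ℂ) / 2 = 0 := by linear_combination -h
          simpa using this
      · exact absurd h hW0
    simp [hc]
  have hTbmem : ∀ k : Fin n, Tb k ∈ Submodule.span ℂ (Set.range Tb ∪ {Wb}) :=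
    fun k => Submodule.subset_span (Or.inl (Set.mem_range_self k))
  refine ⟨?_, ?_, ?_, ?_, ?_, ?_⟩
  · intro y; rw [hWc, map_zero]
  · exact hπbr
  · intro j; rw [hWbc, map_zero]
  · ext A
    simp only [Set.mem_setOf_eq, SetLike.mem_coe]
    constructor
    · rintro ⟨hAmem, hall⟩
      rw [Submodule.span_union] at hAmem
      obtain ⟨t, ht, w, hw, rfl⟩ := Submodule.mem_sup.mp hAmem
      obtain ⟨cw, rfl⟩ := Submodule.mem_span_singleton.mp hw
      have ht0 : t = 0 := by
        apply hinj t ht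
        intro k
        have := hall (Tb k) (hTbmem k)
        rw [lie_add, lie_smul, hWc, smul_zero, add_zero] at this
        exact this
      rw [ht0, zero_add]
      exact hw
    · intro hA
      obtain ⟨cw, rfl⟩ := Submodule.mem_span_singleton.mp hA
      refine ⟨?_, ?_⟩
      · exact Submodule.smul_mem _ _ (Submodule.subset_span (Or.inr rfl))
      · intro B hB; rw [lie_smul, hWc, smul_zero, map_zero]
  · intro A hA hall
    apply hinj A hA
    intro k
    exact hall (Tb k) (hTbmem k)
  · intro μ
    refine ⟨∑ j, (2 * I * μ j) • T j, ?_, ?_, ?_⟩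
    · exact Submodule.sum_mem _ fun j _ =>
        Submodule.smul_mem _ _ (Submodule.subset_span (Set.mem_range_self j))
    · intro k
      rw [hsum]
      congr 1
      have h := Complex.I_mul_I
      ring_nf
      rw [Complex.I_sq]
      ring
    · rw [hWbc, map_zero]
end

section
/- For the complexified Kodaira Lie algebra, the kernel of the operator ∂̄ on Hom_ℂ(𝔤^{0,1}, 𝔤^{1,0}) equals the span of the following elements: ρ̄⊗W, the elements ω̄ᵏ⊗W for 1 ≤ k ≤ n, and the elements φⱼₖ for 1 ≤ j ≤ k ≤ n; in particular this kernel has complex dimension 1 + n + n(n+1)/2. (Hodge decomposition of the type-(1,1) space: the ∂̄-closed part is 𝔠^{1,1} ⊕ ⊙^{1,1} ⊕ (𝔠^{1,0}⊗𝔱^{0,1}).) -/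
open Complex

set_option maxHeartbeats 1600000 in
/-- for the complexified Kodaira Lie algebra, the kernel of the operator `∂̄`
on `Hom_ℂ(𝔤^{0,1}, 𝔤^{1,0})`, where `(∂̄Γ)(B̄₁,B̄₂) = π^{1,0}⁅B̄₁, Γ(B̄₂)⁆ − π^{1,0}⁅B̄₂, Γ(B̄₁)⁆`,
equals the span of `ρ̄⊗W`, the `ω̄ᵏ⊗W` (1 ≤ k ≤ n) and the `φⱼₖ` (1 ≤ j ≤ k ≤ n); in
particular it has complex dimension `1 + n + n(n+1)/2`.  Here `ρ̄`, `ω̄ʲ` denote the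
restrictions to `𝔤^{0,1}` of the corresponding dual-basis functionals (characterized by
their values on `T̄ₖ` and `W̄`), and `φⱼₖ = (1/2)(ω̄ᵏ⊗Tⱼ + ω̄ʲ⊗Tₖ)`. -/
theorem stmt_12 (n : ℕ) (hn : 1 ≤ n) (L : Type*) [LieRing L] [LieAlgebra ℂ L]
    (b : Module.Basis (KIdx n) ℂ L)
    (hb : ∀ i i' : KIdx n, ⁅b i, b i'⁆ = (kc i i' : ℂ) • b (kZ 0))
    (T Tb : Fin n → L) (W Wb : L)
    (hT : ∀ j, T j = (1 / 2 : ℂ) • b (kX j) - (I / 2 : ℂ) • b (kY j))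
    (hTb : ∀ j, Tb j = (1 / 2 : ℂ) • b (kX j) + (I / 2 : ℂ) • b (kY j))
    (hW : W = (1 / 2 : ℂ) • b (kZ 0) - (I / 2 : ℂ) • b (kZ 1))
    (hWb : Wb = (1 / 2 : ℂ) • b (kZ 0) + (I / 2 : ℂ) • b (kZ 1))
    (g10 g01 : Submodule ℂ L)
    (hg10 : g10 = Submodule.span ℂ (Set.range T ∪ {W}))
    (hg01 : g01 = Submodule.span ℂ (Set.range Tb ∪ {Wb}))
    (hTg : ∀ j, T j ∈ g10) (hWg : W ∈ g10)
    (hTbg : ∀ j, Tb j ∈ g01) (hWbg : Wb ∈ g01)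
    (π' : L →ₗ[ℂ] ↥g10)
    (hπT : ∀ j, π' (T j) = ⟨T j, hTg j⟩) (hπTb : ∀ j, π' (Tb j) = 0)
    (hπW : π' W = ⟨W, hWg⟩) (hπWb : π' Wb = 0)
    (ρb : ↥g01 →ₗ[ℂ] ℂ) (ωb : Fin n → (↥g01 →ₗ[ℂ] ℂ))
    (hρbW : ρb ⟨Wb, hWbg⟩ = 1) (hρbT : ∀ j, ρb ⟨Tb j, hTbg j⟩ = 0)
    (hωbT : ∀ j k, ωb j ⟨Tb k, hTbg k⟩ = if j = k then 1 else 0)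
    (hωbW : ∀ j, ωb j ⟨Wb, hWbg⟩ = 0) :
    ({Γ : ↥g01 →ₗ[ℂ] ↥g10 | ∀ B1 B2 : ↥g01,
        π' ⁅(B1 : L), ((Γ B2 : ↥g10) : L)⁆ = π' ⁅(B2 : L), ((Γ B1 : ↥g10) : L)⁆}
      = ↑(Submodule.span ℂ
          ({ρb.smulRight ⟨W, hWg⟩}
            ∪ Set.range (fun k : Fin n => (ωb k).smulRight ⟨W, hWg⟩)
            ∪ {x : ↥g01 →ₗ[ℂ] ↥g10 | ∃ j k : Fin n, j ≤ k ∧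
                x = (1 / 2 : ℂ) • ((ωb k).smulRight ⟨T j, hTg j⟩
                      + (ωb j).smulRight ⟨T k, hTg k⟩)}))) ∧
    Module.finrank ℂ
        ↥(Submodule.span ℂ
          ({ρb.smulRight ⟨W, hWg⟩}
            ∪ Set.range (fun k : Fin n => (ωb k).smulRight ⟨W, hWg⟩)
            ∪ {x : ↥g01 →ₗ[ℂ] ↥g10 | ∃ j k : Fin n, j ≤ k ∧
                x = (1 / 2 : ℂ) • ((ωb k).smulRight ⟨T j, hTg j⟩
                      + (ωb j).smulRight ⟨T k, hTg k⟩)}))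
      = 1 + n + n * (n + 1) / 2 := by
  classical
  -- ===== Part 0 : basic bracket computations =====
  have hZb : ∀ (k : Fin 2) (x : L), ⁅b (kZ k), x⁆ = 0 := by
    intro k x
    have h : (LieAlgebra.ad ℂ L) (b (kZ k)) = 0 := by
      apply b.ext
      intro i
      have hkc : kc (kZ (n := n) k) i = 0 := by
        rcases i with j | j | j <;> rfl
      simp [LieAlgebra.ad_apply, hb, hkc]
    have := LinearMap.congr_fun h x
    simpa [LieAlgebra.ad_apply] using this
  have hZl : ∀ (k : Fin 2) (x : L), ⁅x, b (kZ k)⁆ = 0 := by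
    intro k x; rw [← lie_skew, hZb]; simp
  have hlieW : ∀ x : L, ⁅x, W⁆ = 0 := by
    intro x; rw [hW]; simp [hZl]
  have hlieWb : ∀ x : L, ⁅Wb, x⁆ = 0 := by
    intro x; rw [hWb]; simp [hZb]
  have hTbT : ∀ m j, ⁅Tb m, T j⁆ = (if m = j then (-(I/2) : ℂ) else 0) • b (kZ 0) := by
    intro m j
    rw [hTb, hT]
    simp only [lie_add, add_lie, lie_sub, sub_lie, lie_smul, smul_lie, hb]
    have h1 : kc (kX (n := n) m) (kX j) = 0 := rfl
    have h2 : kc (kY (n := n) m) (kY j) = 0 := rfl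
    have h3 : kc (kX (n := n) m) (kY j) = if m = j then 1 else 0 := rfl
    have h4 : kc (kY (n := n) m) (kX j) = if m = j then -1 else 0 := rfl
    rw [h1, h2, h3, h4]
    by_cases h : m = j <;> simp [h, smul_smul] <;> ring_nf <;> module
  have hπZ : π' (b (kZ 0)) = ⟨W, hWg⟩ := by
    have h : b (kZ 0) = W + Wb := by rw [hW, hWb]; module
    rw [h, map_add, hπW, hπWb, add_zero]
  -- ===== Part 1 : a basis of L made of T, Tb, W, Wb =====
  set e : KIdx n → L := Sum.elim T (Sum.elim Tb ![W, Wb]) with he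
  have heX : ∀ j, e (kX j) = T j := fun j => rfl
  have heY : ∀ j, e (kY j) = Tb j := fun j => rfl
  have heZ0 : e (kZ 0) = W := rfl
  have heZ1 : e (kZ 1) = Wb := rfl
  have hspan : ⊤ ≤ Submodule.span ℂ (Set.range e) := by
    rw [← b.span_eq]
    refine Submodule.span_le.2 ?_
    rintro _ ⟨i, rfl⟩
    have mem : ∀ i, e i ∈ Submodule.span ℂ (Set.range e) :=
      fun i => Submodule.subset_span ⟨i, rfl⟩
    rcases i with j | j | k
    · rw [show (Sum.inl j : KIdx n) = kX j from rfl]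
      have : b (kX j) = e (kX j) + e (kY j) := by
        rw [heX, heY, hT j, hTb j]; module
      rw [this]; exact add_mem (mem _) (mem _)
    · rw [show (Sum.inr (Sum.inl j) : KIdx n) = kY j from rfl]
      have : b (kY j) = I • e (kX j) - I • e (kY j) := by
        rw [heX, heY, hT j, hTb j]
        match_scalars <;>
          first
            | ring1
            | linear_combination Complex.I_sq
            | linear_combination -Complex.I_sq
      rw [this]
      exact sub_mem (Submodule.smul_mem _ _ (mem _)) (Submodule.smul_mem _ _ (mem _))
    · have hk : k = 0 ∨ k = 1 := by
        rcases k with ⟨(_|_|m), hm⟩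
        · exact Or.inl (Fin.ext rfl)
        · exact Or.inr (Fin.ext rfl)
        · omega
      rcases hk with rfl | rfl
      · have : b (kZ 0) = e (kZ 0) + e (kZ 1) := by
          rw [heZ0, heZ1, hW, hWb]; module
        rw [show (Sum.inr (Sum.inr (0 : Fin 2)) : KIdx n) = kZ 0 from rfl, this]
        exact add_mem (mem _) (mem _)
      · have : b (kZ 1) = I • e (kZ 0) - I • e (kZ 1) := by
          rw [heZ0, heZ1, hW, hWb]
          match_scalars <;>
            first
              | ring1
              | linear_combination Complex.I_sq
              | linear_combination -Complex.I_sq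
        rw [show (Sum.inr (Sum.inr (1 : Fin 2)) : KIdx n) = kZ 1 from rfl, this]
        exact sub_mem (Submodule.smul_mem _ _ (mem _)) (Submodule.smul_mem _ _ (mem _))
  have hcard : Fintype.card (KIdx n) = Module.finrank ℂ L :=
    (Module.finrank_eq_card_basis b).symm
  set B : Module.Basis (KIdx n) ℂ L := basisOfTopLeSpanOfCardEqFinrank e hspan hcard with hBdef
  have hB : ∀ i, B i = e i := fun i =>
    congrFun (coe_basisOfTopLeSpanOfCardEqFinrank e hspan hcard) i
  -- ===== Part 2 : bases of g10 and g01 =====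
  set v10 : Fin n ⊕ Unit → L := Sum.elim T (fun _ => W) with hv10def
  have hv10 : LinearIndependent ℂ v10 := by
    have hcomp : v10 = B ∘ (Sum.elim (fun j => kX j) fun _ => kZ 0) := by
      funext i; rcases i with j | u <;> simp [hB, heX, heZ0, hv10def]
    rw [hcomp]
    exact B.linearIndependent.comp _ (by
      rintro (a | a) (c | c) h <;> simp [kX, kZ] at h <;> simp [h])
  have hr10 : Submodule.span ℂ (Set.range v10) = g10 := by
    rw [hg10, hv10def, Set.Sum.elim_range, Set.range_const]
  set B10 : Module.Basis (Fin n ⊕ Unit) ℂ ↥g10 :=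
    (Module.Basis.span hv10).map (LinearEquiv.ofEq _ _ hr10) with hB10def
  have hB10 : ∀ i, ((B10 i : ↥g10) : L) = v10 i := by
    intro i
    rw [hB10def, Module.Basis.map_apply]
    rw [show ∀ x, ((LinearEquiv.ofEq _ _ hr10 x : ↥g10) : L) = (x : L) from fun x => rfl,
      Module.Basis.span_apply]
  have hB10l : ∀ j, B10 (Sum.inl j) = ⟨T j, hTg j⟩ := fun j => Subtype.ext (hB10 (Sum.inl j))
  have hB10r : B10 (Sum.inr ()) = ⟨W, hWg⟩ := Subtype.ext (hB10 (Sum.inr ()))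
  set v01 : Fin n ⊕ Unit → L := Sum.elim Tb (fun _ => Wb) with hv01def
  have hv01 : LinearIndependent ℂ v01 := by
    have hcomp : v01 = B ∘ (Sum.elim (fun j => kY j) fun _ => kZ 1) := by
      funext i; rcases i with j | u <;> simp [hB, heY, heZ1, hv01def]
    rw [hcomp]
    exact B.linearIndependent.comp _ (by
      rintro (a | a) (c | c) h <;> simp [kY, kZ] at h <;> simp [h])
  have hr01 : Submodule.span ℂ (Set.range v01) = g01 := by
    rw [hg01, hv01def, Set.Sum.elim_range, Set.range_const]
  set B01 : Module.Basis (Fin n ⊕ Unit) ℂ ↥g01 :=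
    (Module.Basis.span hv01).map (LinearEquiv.ofEq _ _ hr01) with hB01def
  have hB01 : ∀ i, ((B01 i : ↥g01) : L) = v01 i := by
    intro i
    rw [hB01def, Module.Basis.map_apply]
    rw [show ∀ x, ((LinearEquiv.ofEq _ _ hr01 x : ↥g01) : L) = (x : L) from fun x => rfl,
      Module.Basis.span_apply]
  have hB01l : ∀ j, B01 (Sum.inl j) = ⟨Tb j, hTbg j⟩ := fun j => Subtype.ext (hB01 (Sum.inl j))
  have hB01r : B01 (Sum.inr ()) = ⟨Wb, hWbg⟩ := Subtype.ext (hB01 (Sum.inr ()))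
  -- coordinates on g10
  have cW1 : B10.coord (Sum.inr ()) ⟨W, hWg⟩ = 1 := by
    rw [← hB10r]; simp [Module.Basis.coord_apply, Module.Basis.repr_self]
  have cW2 : ∀ m, B10.coord (Sum.inl m) ⟨W, hWg⟩ = 0 := by
    intro m; rw [← hB10r]; simp [Module.Basis.coord_apply, Module.Basis.repr_self, Finsupp.single_apply]
  have cT1 : ∀ m j, B10.coord (Sum.inl m) ⟨T j, hTg j⟩ = if j = m then 1 else 0 := by
    intro m j; rw [← hB10l j]; simp [Module.Basis.coord_apply, Module.Basis.repr_self, Finsupp.single_apply]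
  have cT2 : ∀ j, B10.coord (Sum.inr ()) ⟨T j, hTg j⟩ = 0 := by
    intro j; rw [← hB10l j]; simp [Module.Basis.coord_apply, Module.Basis.repr_self, Finsupp.single_apply]
  -- values of the dual functionals on basis vectors of g01
  have hρ1 : ∀ m, ρb (B01 (Sum.inl m)) = 0 := fun m => by rw [hB01l m]; exact hρbT m
  have hρ2 : ρb (B01 (Sum.inr ())) = 1 := by rw [hB01r]; exact hρbW
  have hω1 : ∀ k m, ωb k (B01 (Sum.inl m)) = if k = m then 1 else 0 := fun k m => by
    rw [hB01l m]; exact hωbT k m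
  have hω2 : ∀ k, ωb k (B01 (Sum.inr ())) = 0 := fun k => by rw [hB01r]; exact hωbW k
  have cphi : ∀ j0 k0 m k : Fin n,
      B10.coord (Sum.inl m) (((1/2 : ℂ) • ((ωb k0).smulRight (⟨T j0, hTg j0⟩ : ↥g10)
          + (ωb j0).smulRight (⟨T k0, hTg k0⟩ : ↥g10))) (B01 (Sum.inl k)))
        = (1/2 : ℂ) * ((if k0 = k then 1 else 0) * (if j0 = m then 1 else 0)
            + (if j0 = k then 1 else 0) * (if k0 = m then 1 else 0)) := by
    intro j0 k0 m k
    rw [LinearMap.smul_apply, LinearMap.add_apply, LinearMap.smulRight_apply,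
      LinearMap.smulRight_apply, hω1, hω1, map_smul, map_add, map_smul, map_smul, cT1, cT1]
    simp only [smul_eq_mul]
  -- ===== Part 3 : the projection of brackets =====
  have hπTblie : ∀ (m : Fin n) (y : ↥g10),
      π' ⁅Tb m, (y : L)⁆ = (-(I/2) * B10.coord (Sum.inl m) y) • (⟨W, hWg⟩ : ↥g10) := by
    intro m y
    set Pm : ↥g10 →ₗ[ℂ] ↥g10 :=
      π' ∘ₗ ((LieAlgebra.ad ℂ L (Tb m) : L →ₗ[ℂ] L) ∘ₗ g10.subtype) with hPmdef
    set Qm : ↥g10 →ₗ[ℂ] ↥g10 :=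
      (-(I/2) : ℂ) • (B10.coord (Sum.inl m)).smulRight (⟨W, hWg⟩ : ↥g10) with hQmdef
    have hPQ : Pm = Qm := by
      apply B10.ext
      intro i
      rcases i with j | u
      · have hcoe : ((B10 (Sum.inl j) : ↥g10) : L) = T j := hB10 (Sum.inl j)
        have hl : Pm (B10 (Sum.inl j)) = π' ⁅Tb m, T j⁆ := by
          simp [hPmdef, LieAlgebra.ad_apply, hcoe]
        rw [hl, hTbT m j, map_smul, hπZ, hQmdef]
        simp only [LinearMap.smul_apply, LinearMap.smulRight_apply, cT1]
        by_cases h : m = j <;> simp [h, eq_comm, smul_smul]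
      · have hcoe : ((B10 (Sum.inr u) : ↥g10) : L) = W := hB10 (Sum.inr u)
        have hl : Pm (B10 (Sum.inr u)) = π' ⁅Tb m, W⁆ := by
          simp [hPmdef, LieAlgebra.ad_apply, hcoe]
        rw [hl, hlieW, map_zero, hQmdef]
        rcases u with ⟨⟩
        simp only [LinearMap.smul_apply, LinearMap.smulRight_apply, hB10r, cW2]
        simp
    have := LinearMap.congr_fun hPQ y
    simpa [hPmdef, hQmdef, LieAlgebra.ad_apply, smul_smul] using this
  have hπWblie : ∀ y : L, π' ⁅Wb, y⁆ = 0 := fun y => by rw [hlieWb]; simp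
  -- scalar extraction
  have scal : ∀ c c' : ℂ, c • (⟨W, hWg⟩ : ↥g10) = c' • (⟨W, hWg⟩ : ↥g10) → c = c' := by
    intro c c' h
    have h2 : B10.coord (Sum.inr ()) (c • (⟨W, hWg⟩ : ↥g10))
        = B10.coord (Sum.inr ()) (c' • (⟨W, hWg⟩ : ↥g10)) := congrArg _ h
    rw [map_smul, map_smul, cW1, smul_eq_mul, smul_eq_mul, mul_one, mul_one] at h2
    exact h2
  have hI2 : (-(I/2) : ℂ) ≠ 0 := by
    simp [div_eq_zero_iff, Complex.I_ne_zero]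
  -- ===== Part 4 : basis-pair criterion =====
  have hcrit : ∀ Γ : ↥g01 →ₗ[ℂ] ↥g10,
      (∀ i i' : Fin n ⊕ Unit,
        π' ⁅((B01 i : ↥g01) : L), ((Γ (B01 i') : ↥g10) : L)⁆
          = π' ⁅((B01 i' : ↥g01) : L), ((Γ (B01 i) : ↥g10) : L)⁆) →
      ∀ B1 B2 : ↥g01,
        π' ⁅(B1 : L), ((Γ B2 : ↥g10) : L)⁆ = π' ⁅(B2 : L), ((Γ B1 : ↥g10) : L)⁆ := by
    intro Γ h B1 B2
    set br : ↥g01 →ₗ[ℂ] ↥g01 →ₗ[ℂ] ↥g10 := LinearMap.mk₂ ℂ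
      (fun x y : ↥g01 => π' ⁅(x : L), ((Γ y : ↥g10) : L)⁆)
      (fun x x' y => by simp [add_lie])
      (fun c x y => by simp [smul_lie])
      (fun x y y' => by simp [lie_add])
      (fun c x y => by simp [lie_smul]) with hbrdef
    have heq : br = br.flip := by
      apply B01.ext; intro i
      apply B01.ext; intro i'
      simpa [hbrdef, LinearMap.flip_apply] using h i i'
    have := LinearMap.congr_fun (LinearMap.congr_fun heq B1) B2
    simpa [hbrdef, LinearMap.flip_apply] using this
  -- value of the two-sided expression on basis pairs
  have keyval : ∀ (Γ : ↥g01 →ₗ[ℂ] ↥g10) (m : Fin n) (i' : Fin n ⊕ Unit),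
      π' ⁅((B01 (Sum.inl m) : ↥g01) : L), ((Γ (B01 i') : ↥g10) : L)⁆
        = (-(I/2) * B10.coord (Sum.inl m) (Γ (B01 i'))) • (⟨W, hWg⟩ : ↥g10) := by
    intro Γ m i'
    rw [hB01 (Sum.inl m)]
    exact hπTblie m _
  have keyvalW : ∀ (Γ : ↥g01 →ₗ[ℂ] ↥g10) (i' : Fin n ⊕ Unit),
      π' ⁅((B01 (Sum.inr ()) : ↥g01) : L), ((Γ (B01 i') : ↥g10) : L)⁆ = 0 := by
    intro Γ i'
    rw [hB01 (Sum.inr ())]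
    exact hπWblie _
  -- ===== Part 5 : coordinate characterization of the kernel =====
  have hcond : ∀ Γ : ↥g01 →ₗ[ℂ] ↥g10,
      (∀ B1 B2 : ↥g01,
        π' ⁅(B1 : L), ((Γ B2 : ↥g10) : L)⁆ = π' ⁅(B2 : L), ((Γ B1 : ↥g10) : L)⁆)
      ↔ ((∀ m k, B10.coord (Sum.inl m) (Γ (B01 (Sum.inl k)))
              = B10.coord (Sum.inl k) (Γ (B01 (Sum.inl m))))
          ∧ (∀ k, B10.coord (Sum.inl k) (Γ (B01 (Sum.inr ()))) = 0)) := by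
    intro Γ
    constructor
    · intro h
      constructor
      · intro m k
        have h1 := h (B01 (Sum.inl m)) (B01 (Sum.inl k))
        rw [keyval, keyval] at h1
        exact mul_left_cancel₀ hI2 (scal _ _ h1)
      · intro k
        have h1 := h (B01 (Sum.inr ())) (B01 (Sum.inl k))
        rw [keyvalW, keyval] at h1
        have h2 : (0 : ℂ) • (⟨W, hWg⟩ : ↥g10)
            = (-(I/2) * B10.coord (Sum.inl k) (Γ (B01 (Sum.inr ())))) • ⟨W, hWg⟩ := by
          rw [zero_smul]; exact h1
        have h3 := (scal _ _ h2).symm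
        rcases mul_eq_zero.1 h3 with h4 | h4
        · exact absurd h4 hI2
        · exact h4
    · rintro ⟨hA, hD⟩
      apply hcrit
      intro i i'
      rcases i with m | u <;> rcases i' with k | u'
      · rw [keyval, keyval, hA m k]
      · rcases u' with ⟨⟩
        rw [keyval, keyvalW, hD m, mul_zero, zero_smul]
      · rcases u with ⟨⟩
        rw [keyval, keyvalW, hD k, mul_zero, zero_smul]
      · rcases u with ⟨⟩; rcases u' with ⟨⟩
        rfl
  -- ===== Part 6 : membership in the span for symmetric kernel elements =====
  have memspan :
      ∀ Γ : ↥g01 →ₗ[ℂ] ↥g10,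
        (∀ m k, B10.coord (Sum.inl m) (Γ (B01 (Sum.inl k)))
            = B10.coord (Sum.inl k) (Γ (B01 (Sum.inl m)))) →
        (∀ k, B10.coord (Sum.inl k) (Γ (B01 (Sum.inr ()))) = 0) →
        Γ ∈ Submodule.span ℂ
          ({ρb.smulRight ⟨W, hWg⟩}
            ∪ Set.range (fun k : Fin n => (ωb k).smulRight ⟨W, hWg⟩)
            ∪ {x : ↥g01 →ₗ[ℂ] ↥g10 | ∃ j k : Fin n, j ≤ k ∧
                x = (1 / 2 : ℂ) • ((ωb k).smulRight ⟨T j, hTg j⟩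
                      + (ωb j).smulRight ⟨T k, hTg k⟩)}) := by
    intro Γ hA hD
    have hexp : Γ =
        (B10.coord (Sum.inr ()) (Γ (B01 (Sum.inr ())))) • ρb.smulRight ⟨W, hWg⟩
        + (∑ k, (B10.coord (Sum.inr ()) (Γ (B01 (Sum.inl k)))) • (ωb k).smulRight ⟨W, hWg⟩)
        + ∑ j, ∑ k, (B10.coord (Sum.inl j) (Γ (B01 (Sum.inl k)))) •
            (ωb k).smulRight (⟨T j, hTg j⟩ : ↥g10) := by
      apply B01.ext
      intro i
      have hrepr := (B10.sum_repr (Γ (B01 i))).symm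
      rcases i with m | u
      · calc Γ (B01 (Sum.inl m))
            = ∑ i10, B10.repr (Γ (B01 (Sum.inl m))) i10 • B10 i10 :=
              (B10.sum_repr (Γ (B01 (Sum.inl m)))).symm
          _ = (∑ j, B10.coord (Sum.inl j) (Γ (B01 (Sum.inl m))) • (⟨T j, hTg j⟩ : ↥g10))
              + B10.coord (Sum.inr ()) (Γ (B01 (Sum.inl m))) • (⟨W, hWg⟩ : ↥g10) := by
            rw [Fintype.sum_sum_type]
            simp [hB10l, hB10r, Module.Basis.coord_apply]
          _ = _ := by
            simp only [LinearMap.add_apply, LinearMap.sum_apply, LinearMap.smul_apply,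
              LinearMap.smulRight_apply, hρ1, hρ2, hω1, hω2, smul_zero, zero_smul, add_zero,
              zero_add, ite_smul, one_smul, smul_ite]
            rw [Finset.sum_ite_eq' Finset.univ m
              (fun k => B10.coord (Sum.inr ()) (Γ (B01 (Sum.inl k))) • (⟨W, hWg⟩ : ↥g10))]
            simp only [Finset.mem_univ, if_true]
            have : ∀ j : Fin n,
                (∑ k, if k = m then
                    B10.coord (Sum.inl j) (Γ (B01 (Sum.inl k))) • (⟨T j, hTg j⟩ : ↥g10)
                  else 0)
                = B10.coord (Sum.inl j) (Γ (B01 (Sum.inl m))) • (⟨T j, hTg j⟩ : ↥g10) := by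
              intro j
              rw [Finset.sum_ite_eq' Finset.univ m
                (fun k => B10.coord (Sum.inl j) (Γ (B01 (Sum.inl k))) • (⟨T j, hTg j⟩ : ↥g10))]
              simp
            rw [Finset.sum_congr rfl fun j _ => this j]
            abel
      · rcases u with ⟨⟩
        calc Γ (B01 (Sum.inr ()))
            = ∑ i10, B10.repr (Γ (B01 (Sum.inr ()))) i10 • B10 i10 :=
              (B10.sum_repr (Γ (B01 (Sum.inr ())))).symm
          _ = B10.coord (Sum.inr ()) (Γ (B01 (Sum.inr ()))) • (⟨W, hWg⟩ : ↥g10) := by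
            rw [Fintype.sum_sum_type]
            have hz : ∀ j : Fin n, B10.repr (Γ (B01 (Sum.inr ()))) (Sum.inl j) = 0 :=
              fun j => hD j
            simp [hz, hB10r, Module.Basis.coord_apply]
          _ = _ := by
            simp only [LinearMap.add_apply, LinearMap.sum_apply, LinearMap.smul_apply,
              LinearMap.smulRight_apply, hρ2, hω2, zero_smul, smul_zero, add_zero,
              Finset.sum_const_zero, one_smul]
    rw [hexp]
    refine Submodule.add_mem _ (Submodule.add_mem _ ?_ ?_) ?_
    · exact Submodule.smul_mem _ _ (Submodule.subset_span (Or.inl (Or.inl rfl)))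
    · exact Submodule.sum_mem _ fun k _ => Submodule.smul_mem _ _
        (Submodule.subset_span (Or.inl (Or.inr ⟨k, rfl⟩)))
    · have key : ∀ j k : Fin n,
          (1/2 : ℂ) • ((ωb k).smulRight (⟨T j, hTg j⟩ : ↥g10)
              + (ωb j).smulRight (⟨T k, hTg k⟩ : ↥g10))
            ∈ Submodule.span ℂ
              ({ρb.smulRight ⟨W, hWg⟩}
                ∪ Set.range (fun k : Fin n => (ωb k).smulRight ⟨W, hWg⟩)
                ∪ {x : ↥g01 →ₗ[ℂ] ↥g10 | ∃ j k : Fin n, j ≤ k ∧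
                    x = (1 / 2 : ℂ) • ((ωb k).smulRight ⟨T j, hTg j⟩
                          + (ωb j).smulRight ⟨T k, hTg k⟩)}) := by
        intro j k
        rcases le_or_gt j k with h | h
        · exact Submodule.subset_span (Or.inr ⟨j, k, h, rfl⟩)
        · refine Submodule.subset_span (Or.inr ⟨k, j, h.le, ?_⟩)
          rw [add_comm]
      have h1 : ∑ j, ∑ k, (B10.coord (Sum.inl j) (Γ (B01 (Sum.inl k)))) •
            (ωb j).smulRight (⟨T k, hTg k⟩ : ↥g10)
          = ∑ j, ∑ k, (B10.coord (Sum.inl j) (Γ (B01 (Sum.inl k)))) •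
            (ωb k).smulRight (⟨T j, hTg j⟩ : ↥g10) := by
        rw [Finset.sum_comm]
        exact Finset.sum_congr rfl fun x _ => Finset.sum_congr rfl fun y _ => by rw [hA y x]
      have hsum : ∑ j, ∑ k, (B10.coord (Sum.inl j) (Γ (B01 (Sum.inl k)))) •
            (ωb k).smulRight (⟨T j, hTg j⟩ : ↥g10)
          = ∑ j, ∑ k, (B10.coord (Sum.inl j) (Γ (B01 (Sum.inl k)))) •
            ((1/2 : ℂ) • ((ωb k).smulRight (⟨T j, hTg j⟩ : ↥g10)
              + (ωb j).smulRight (⟨T k, hTg k⟩ : ↥g10))) := by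
        have expand : ∀ j k : Fin n,
            (B10.coord (Sum.inl j) (Γ (B01 (Sum.inl k)))) •
              ((1/2 : ℂ) • ((ωb k).smulRight (⟨T j, hTg j⟩ : ↥g10)
                + (ωb j).smulRight (⟨T k, hTg k⟩ : ↥g10)))
            = (1/2 : ℂ) • ((B10.coord (Sum.inl j) (Γ (B01 (Sum.inl k)))) •
                (ωb k).smulRight (⟨T j, hTg j⟩ : ↥g10))
              + (1/2 : ℂ) • ((B10.coord (Sum.inl j) (Γ (B01 (Sum.inl k)))) •
                (ωb j).smulRight (⟨T k, hTg k⟩ : ↥g10)) := fun j k => by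
          module
        rw [Finset.sum_congr rfl fun j _ => Finset.sum_congr rfl fun k _ => expand j k]
        simp only [Finset.sum_add_distrib, ← Finset.smul_sum]
        rw [h1]
        module
      rw [hsum]
      exact Submodule.sum_mem _ fun j _ => Submodule.sum_mem _ fun k _ =>
        Submodule.smul_mem _ _ (key j k)
  -- ===== Part 7 : generators lie in the kernel =====
  have hgen : ∀ x ∈ ({ρb.smulRight ⟨W, hWg⟩}
            ∪ Set.range (fun k : Fin n => (ωb k).smulRight ⟨W, hWg⟩)
            ∪ {x : ↥g01 →ₗ[ℂ] ↥g10 | ∃ j k : Fin n, j ≤ k ∧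
                x = (1 / 2 : ℂ) • ((ωb k).smulRight ⟨T j, hTg j⟩
                      + (ωb j).smulRight ⟨T k, hTg k⟩)} : Set (↥g01 →ₗ[ℂ] ↥g10)),
      ∀ B1 B2 : ↥g01,
        π' ⁅(B1 : L), ((x B2 : ↥g10) : L)⁆ = π' ⁅(B2 : L), ((x B1 : ↥g10) : L)⁆ := by
    intro x hx
    apply (hcond x).2
    simp only [Set.mem_union, Set.mem_singleton_iff, Set.mem_range, Set.mem_setOf_eq] at hx
    rcases hx with (rfl | ⟨k0, rfl⟩) | ⟨j0, k0, hjk, rfl⟩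
    · constructor
      · intro m k
        simp [LinearMap.smulRight_apply, hρ1]
      · intro k
        simp [LinearMap.smulRight_apply, hρ2, cW2]
    · constructor
      · intro m k
        simp [LinearMap.smulRight_apply, hω1, ite_smul, apply_ite, cW2]
      · intro k
        simp [LinearMap.smulRight_apply, hω2]
    · constructor
      · intro m k
        rw [cphi j0 k0 m k, cphi j0 k0 k m]
        ring
      · intro k
        simp [LinearMap.smulRight_apply, hω2]
  -- ===== Part 8 : conclusion, first statement =====
  constructor
  · ext Γ
    simp only [Set.mem_setOf_eq, SetLike.mem_coe]
    constructor
    · intro h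
      obtain ⟨hA, hD⟩ := (hcond Γ).1 h
      exact memspan Γ hA hD
    · intro h
      refine Submodule.span_induction (fun x hx => hgen x hx) ?_ ?_ ?_ h
      · intro B1 B2; simp
      · intro x y hx' hy' hx hy B1 B2
        simp only [LinearMap.add_apply, Submodule.coe_add, lie_add, map_add]
        rw [hx B1 B2, hy B1 B2]
      · intro c x hx' hx B1 B2
        simp only [LinearMap.smul_apply, SetLike.val_smul, lie_smul, map_smul]
        rw [hx B1 B2]
  -- ===== Part 9 : dimension count =====
  · set F : (Unit ⊕ (Fin n ⊕ {p : Fin n × Fin n // p.1 ≤ p.2})) → (↥g01 →ₗ[ℂ] ↥g10) :=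
      Sum.elim (fun _ => ρb.smulRight ⟨W, hWg⟩)
        (Sum.elim (fun k => (ωb k).smulRight ⟨W, hWg⟩)
          (fun p => (1/2 : ℂ) • ((ωb p.1.2).smulRight (⟨T p.1.1, hTg p.1.1⟩ : ↥g10)
              + (ωb p.1.1).smulRight (⟨T p.1.2, hTg p.1.2⟩ : ↥g10)))) with hFdef
    have hrange : ({ρb.smulRight ⟨W, hWg⟩}
            ∪ Set.range (fun k : Fin n => (ωb k).smulRight ⟨W, hWg⟩)
            ∪ {x : ↥g01 →ₗ[ℂ] ↥g10 | ∃ j k : Fin n, j ≤ k ∧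
                x = (1 / 2 : ℂ) • ((ωb k).smulRight ⟨T j, hTg j⟩
                      + (ωb j).smulRight ⟨T k, hTg k⟩)} : Set (↥g01 →ₗ[ℂ] ↥g10))
        = Set.range F := by
      ext x
      simp only [Set.mem_union, Set.mem_singleton_iff, Set.mem_range, Set.mem_setOf_eq]
      constructor
      · rintro ((hx | ⟨k, rfl⟩) | ⟨j, k, hjk, rfl⟩)
        · exact ⟨Sum.inl (), hx.symm⟩
        · exact ⟨Sum.inr (Sum.inl k), rfl⟩
        · exact ⟨Sum.inr (Sum.inr ⟨(j, k), hjk⟩), rfl⟩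
      · rintro ⟨(u | k | p), rfl⟩
        · exact Or.inl (Or.inl rfl)
        · exact Or.inl (Or.inr ⟨k, rfl⟩)
        · exact Or.inr ⟨p.1.1, p.1.2, p.2, rfl⟩
    -- values of the generators on the basis of g01
    have vρ1 : ∀ m, (ρb.smulRight (⟨W, hWg⟩ : ↥g10)) (B01 (Sum.inl m)) = 0 := fun m => by
      simp [LinearMap.smulRight_apply, hρ1]
    have vρ2 : (ρb.smulRight (⟨W, hWg⟩ : ↥g10)) (B01 (Sum.inr ())) = ⟨W, hWg⟩ := by
      simp [LinearMap.smulRight_apply, hρ2]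
    have vω1 : ∀ k m, ((ωb k).smulRight (⟨W, hWg⟩ : ↥g10)) (B01 (Sum.inl m))
        = if k = m then (⟨W, hWg⟩ : ↥g10) else 0 := fun k m => by
      simp [LinearMap.smulRight_apply, hω1, ite_smul]
    have vω2 : ∀ k, ((ωb k).smulRight (⟨W, hWg⟩ : ↥g10)) (B01 (Sum.inr ())) = 0 := fun k => by
      simp [LinearMap.smulRight_apply, hω2]
    have vφ1 : ∀ j0 k0 m : Fin n, (((1/2 : ℂ) • ((ωb k0).smulRight (⟨T j0, hTg j0⟩ : ↥g10)
        + (ωb j0).smulRight (⟨T k0, hTg k0⟩ : ↥g10))) (B01 (Sum.inl m)))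
          = (1/2 : ℂ) • ((if k0 = m then (1:ℂ) else 0) • (⟨T j0, hTg j0⟩ : ↥g10)
            + (if j0 = m then (1:ℂ) else 0) • (⟨T k0, hTg k0⟩ : ↥g10)) := by
      intro j0 k0 m
      simp [LinearMap.smulRight_apply, hω1]
    have vφ2 : ∀ j0 k0 : Fin n, (((1/2 : ℂ) • ((ωb k0).smulRight (⟨T j0, hTg j0⟩ : ↥g10)
        + (ωb j0).smulRight (⟨T k0, hTg k0⟩ : ↥g10))) (B01 (Sum.inr ()))) = 0 := by
      intro j0 k0
      simp [LinearMap.smulRight_apply, hω2]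
    have hlinind : LinearIndependent ℂ F := by
      rw [Fintype.linearIndependent_iff]
      intro g hg
      have hcsum : ∀ (x : ↥g01) (i0 : Fin n ⊕ Unit),
          (∑ u : Unit, g (Sum.inl u) * B10.coord i0 (F (Sum.inl u) x))
          + ((∑ k, g (Sum.inr (Sum.inl k)) * B10.coord i0 (F (Sum.inr (Sum.inl k)) x))
            + ∑ p, g (Sum.inr (Sum.inr p)) * B10.coord i0 (F (Sum.inr (Sum.inr p)) x)) = 0 := by
        intro x i0
        have h1 := congrArg (fun Φ : ↥g01 →ₗ[ℂ] ↥g10 => B10.coord i0 (Φ x)) hg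
        simp only [LinearMap.sum_apply, LinearMap.smul_apply, map_sum, map_smul,
          smul_eq_mul, LinearMap.zero_apply, map_zero] at h1
        rw [Fintype.sum_sum_type, Fintype.sum_sum_type] at h1
        exact h1
      have hg1 : g (Sum.inl ()) = 0 := by
        have h1 := hcsum (B01 (Sum.inr ())) (Sum.inr ())
        have hz1 : ∀ u : Unit, B10.coord (Sum.inr ()) (F (Sum.inl u) (B01 (Sum.inr ()))) = 1 := by
          intro u
          rw [show F (Sum.inl u) = ρb.smulRight ⟨W, hWg⟩ from rfl, vρ2]
          exact cW1
        have hz2 : ∀ k, B10.coord (Sum.inr ()) (F (Sum.inr (Sum.inl k)) (B01 (Sum.inr ()))) = 0 := by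
          intro k
          rw [show F (Sum.inr (Sum.inl k)) = (ωb k).smulRight ⟨W, hWg⟩ from rfl, vω2 k, map_zero]
        have hz3 : ∀ p : {p : Fin n × Fin n // p.1 ≤ p.2},
            B10.coord (Sum.inr ()) (F (Sum.inr (Sum.inr p)) (B01 (Sum.inr ()))) = 0 := by
          intro p
          rw [show F (Sum.inr (Sum.inr p)) = (1/2 : ℂ) •
            ((ωb p.1.2).smulRight (⟨T p.1.1, hTg p.1.1⟩ : ↥g10)
              + (ωb p.1.1).smulRight (⟨T p.1.2, hTg p.1.2⟩ : ↥g10)) from rfl,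
            vφ2 p.1.1 p.1.2, map_zero]
        simp only [hz1, hz2, hz3, mul_one, mul_zero, Finset.sum_const_zero, add_zero] at h1
        simpa using h1
      have hg2 : ∀ k0, g (Sum.inr (Sum.inl k0)) = 0 := by
        intro k0
        have h1 := hcsum (B01 (Sum.inl k0)) (Sum.inr ())
        have hz1 : ∀ u : Unit, B10.coord (Sum.inr ()) (F (Sum.inl u) (B01 (Sum.inl k0))) = 0 := by
          intro u
          rw [show F (Sum.inl u) = ρb.smulRight ⟨W, hWg⟩ from rfl, vρ1 k0, map_zero]
        have hz2 : ∀ k, B10.coord (Sum.inr ()) (F (Sum.inr (Sum.inl k)) (B01 (Sum.inl k0)))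
            = if k = k0 then 1 else 0 := by
          intro k
          rw [show F (Sum.inr (Sum.inl k)) = (ωb k).smulRight ⟨W, hWg⟩ from rfl, vω1 k k0]
          by_cases h : k = k0
          · rw [if_pos h, if_pos h]; exact cW1
          · rw [if_neg h, if_neg h, map_zero]
        have hz3 : ∀ p : {p : Fin n × Fin n // p.1 ≤ p.2},
            B10.coord (Sum.inr ()) (F (Sum.inr (Sum.inr p)) (B01 (Sum.inl k0))) = 0 := by
          intro p
          rw [show F (Sum.inr (Sum.inr p)) = (1/2 : ℂ) •
            ((ωb p.1.2).smulRight (⟨T p.1.1, hTg p.1.1⟩ : ↥g10)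
              + (ωb p.1.1).smulRight (⟨T p.1.2, hTg p.1.2⟩ : ↥g10)) from rfl,
            vφ1 p.1.1 p.1.2 k0]
          rw [map_smul, map_add, map_smul, map_smul, cT2, cT2]
          simp
        simp only [hz1, hz2, hz3, mul_one, mul_zero, Finset.sum_const_zero, add_zero,
          zero_add, mul_ite] at h1
        rw [Finset.sum_ite_eq' Finset.univ k0 (fun k => g (Sum.inr (Sum.inl k)))] at h1
        simpa using h1
      have hg3 : ∀ p0 : {p : Fin n × Fin n // p.1 ≤ p.2}, g (Sum.inr (Sum.inr p0)) = 0 := by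
        rintro ⟨⟨j1, k1⟩, hp⟩
        have h1 := hcsum (B01 (Sum.inl k1)) (Sum.inl j1)
        have hz1 : ∀ u : Unit, B10.coord (Sum.inl j1) (F (Sum.inl u) (B01 (Sum.inl k1))) = 0 := by
          intro u
          rw [show F (Sum.inl u) = ρb.smulRight ⟨W, hWg⟩ from rfl, vρ1 k1, map_zero]
        have hz2 : ∀ k, B10.coord (Sum.inl j1) (F (Sum.inr (Sum.inl k)) (B01 (Sum.inl k1)))
            = 0 := by
          intro k
          rw [show F (Sum.inr (Sum.inl k)) = (ωb k).smulRight ⟨W, hWg⟩ from rfl, vω1 k k1]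
          by_cases h : k = k1
          · rw [if_pos h]; exact cW2 j1
          · rw [if_neg h, map_zero]
        have hterm : ∀ p : {p : Fin n × Fin n // p.1 ≤ p.2},
            B10.coord (Sum.inl j1) (F (Sum.inr (Sum.inr p)) (B01 (Sum.inl k1)))
              = (1/2 : ℂ) * ((if p.1.2 = k1 then 1 else 0) * (if p.1.1 = j1 then 1 else 0)
                  + (if p.1.1 = k1 then 1 else 0) * (if p.1.2 = j1 then 1 else 0)) := by
          intro p
          exact cphi p.1.1 p.1.2 j1 k1
        simp only [hz1, hz2, hterm, mul_zero, Finset.sum_const_zero, add_zero, zero_add] at h1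
        rw [Finset.sum_eq_single (⟨(j1, k1), hp⟩ : {p : Fin n × Fin n // p.1 ≤ p.2})] at h1
        · have hcoeff : ((1/2 : ℂ) * ((if (k1 : Fin n) = k1 then (1:ℂ) else 0)
              * (if (j1 : Fin n) = j1 then 1 else 0)
              + (if j1 = k1 then 1 else 0) * (if k1 = j1 then 1 else 0))) ≠ 0 := by
            rcases eq_or_ne j1 k1 with h | h
            · rw [if_pos rfl, if_pos rfl, if_pos h, if_pos h.symm]; norm_num
            · rw [if_pos rfl, if_pos rfl, if_neg h, if_neg (Ne.symm h)]; norm_num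
          exact (mul_eq_zero.1 h1).resolve_right hcoeff
        · rintro ⟨⟨j, k⟩, hb⟩ _ hbne
          rcases eq_or_ne (j, k) (j1, k1) with heq | hne
          · exact absurd (Subtype.ext heq) hbne
          · have hn1 : ¬(k = k1 ∧ j = j1) := by
              rintro ⟨rfl, rfl⟩; exact hne rfl
            have hn2 : ¬(j = k1 ∧ k = j1) := by
              rintro ⟨rfl, rfl⟩
              have hb' : j ≤ k := hb
              have hp' : k ≤ j := hp
              obtain rfl := le_antisymm hb' hp'
              exact hne rfl
            have e1 : (if (k : Fin n) = k1 then (1:ℂ) else 0)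
                * (if (j : Fin n) = j1 then 1 else 0) = 0 := by
              by_cases hk : k = k1
              · by_cases hj : j = j1
                · exact absurd ⟨hk, hj⟩ hn1
                · simp [hj]
              · simp [hk]
            have e2 : (if (j : Fin n) = k1 then (1:ℂ) else 0)
                * (if (k : Fin n) = j1 then 1 else 0) = 0 := by
              by_cases hk : j = k1
              · by_cases hj : k = j1
                · exact absurd ⟨hk, hj⟩ hn2
                · simp [hj]
              · simp [hk]
            simp only [e1, e2, add_zero, mul_zero]
        · intro habs
          exact absurd (Finset.mem_univ _) habs
      intro i
      rcases i with u | k | p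
      · rcases u with ⟨⟩; exact hg1
      · exact hg2 k
      · exact hg3 p
    rw [hrange, finrank_span_eq_card hlinind]
    have hsub : Fintype.card {p : Fin n × Fin n // p.1 ≤ p.2} = n * (n + 1) / 2 := by
      rw [← Fintype.card_congr (Sym2.sortEquiv (α := Fin n)), Sym2.card, Fintype.card_fin,
        Nat.choose_two_right, Nat.add_sub_cancel, Nat.mul_comm]
    simp only [Fintype.card_sum, Fintype.card_unit, Fintype.card_fin, hsub]
    omega
end
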